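/- Let N ≥ 2, let r_{ij} (i ≠ j) be real numbers, let m_i > 0 for all i, let Δt > 0, and let ũ ∈ ℝ^N. Then the flux-corrected value produced by Zalesak's limiter satisfies the local discrete maximum principle: for every i, min_{1≤j≤N} ũ_j ≤ ũ_i + (Δt/m_i) ∑_{j≠i} α_{ij} r_{ij} ≤ max_{1≤j≤N} ũ_j. -/

import Mathlib

noncomputable section

/-- For `N ≥ 2`, the set of indices different from `i` is nonempty. -/
lemma eraseUnivNonempty {N : ℕ} (hN : 2 ≤ N) (i : Fin N) :
    ((Finset.univ : Finset (Fin N)).erase i).Nonempty := by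
  rw [← Finset.card_pos, Finset.card_erase_of_mem (Finset.mem_univ i), Finset.card_univ,
    Fintype.card_fin]
  omega

/-- For `N ≥ 1`, `Fin N` is nonempty as a finset. -/
lemma univNonempty {N : ℕ} (hN : 1 ≤ N) :
    (Finset.univ : Finset (Fin N)).Nonempty := by
  rw [← Finset.card_pos, Finset.card_univ, Fintype.card_fin]
  omega

/-- `P_i^+ = ∑_{j ≠ i} max{r_{ij}, 0}`. -/
def Pp {N : ℕ} (r : Fin N → Fin N → ℝ) (i : Fin N) : ℝ :=
  ∑ j ∈ Finset.univ.erase i, max (r i j) 0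

/-- `P_i^- = ∑_{j ≠ i} min{r_{ij}, 0}`. -/
def Pm {N : ℕ} (r : Fin N → Fin N → ℝ) (i : Fin N) : ℝ :=
  ∑ j ∈ Finset.univ.erase i, min (r i j) 0

/-- `Q_i^+ = max{0, max_{j ≠ i} (ũ_j - ũ_i)}`. -/
def Qp {N : ℕ} (hN : 2 ≤ N) (u : Fin N → ℝ) (i : Fin N) : ℝ :=
  max 0 ((Finset.univ.erase i).sup' (eraseUnivNonempty hN i) fun j => u j - u i)

/-- `Q_i^- = min{0, min_{j ≠ i} (ũ_j - ũ_i)}`. -/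
def Qm {N : ℕ} (hN : 2 ≤ N) (u : Fin N → ℝ) (i : Fin N) : ℝ :=
  min 0 ((Finset.univ.erase i).inf' (eraseUnivNonempty hN i) fun j => u j - u i)

/-- `R_i^+ = min{1, m_i Q_i^+ / (Δt P_i^+)}`, with `R_i^+ = 1` if `P_i^+ = 0`. -/
def Rp {N : ℕ} (hN : 2 ≤ N) (r : Fin N → Fin N → ℝ) (m : Fin N → ℝ) (Δt : ℝ)
    (u : Fin N → ℝ) (i : Fin N) : ℝ :=
  if Pp r i = 0 then 1 else min 1 (m i * Qp hN u i / (Δt * Pp r i))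

/-- `R_i^- = min{1, m_i Q_i^- / (Δt P_i^-)}`, with `R_i^- = 1` if `P_i^- = 0`. -/
def Rm {N : ℕ} (hN : 2 ≤ N) (r : Fin N → Fin N → ℝ) (m : Fin N → ℝ) (Δt : ℝ)
    (u : Fin N → ℝ) (i : Fin N) : ℝ :=
  if Pm r i = 0 then 1 else min 1 (m i * Qm hN u i / (Δt * Pm r i))

/-- Zalesak's correction factors. -/
def zalesakAlpha {N : ℕ} (hN : 2 ≤ N) (r : Fin N → Fin N → ℝ) (m : Fin N → ℝ)
    (Δt : ℝ) (u : Fin N → ℝ) (i j : Fin N) : ℝ :=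
  if 0 < r i j then min (Rp hN r m Δt u i) (Rm hN r m Δt u j)
  else min (Rm hN r m Δt u i) (Rp hN r m Δt u j)

section ZalesakAux

variable {N : ℕ} (hN : 2 ≤ N) (r : Fin N → Fin N → ℝ) (m : Fin N → ℝ) (Δt : ℝ) (u : Fin N → ℝ)

lemma Pp_nonneg (i : Fin N) : 0 ≤ Pp r i :=
  Finset.sum_nonneg fun _ _ => le_max_right _ _

lemma Pm_nonpos (i : Fin N) : Pm r i ≤ 0 :=
  Finset.sum_nonpos fun _ _ => min_le_right _ _

lemma Qp_nonneg (i : Fin N) : 0 ≤ Qp hN u i := le_max_left _ _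

lemma Qm_nonpos (i : Fin N) : Qm hN u i ≤ 0 := min_le_left _ _

lemma Rp_nonneg (hm : ∀ i, 0 < m i) (hΔt : 0 < Δt) (i : Fin N) :
    0 ≤ Rp hN r m Δt u i := by
  unfold Rp
  split
  · exact zero_le_one
  · exact le_min zero_le_one (div_nonneg (mul_nonneg (hm i).le (Qp_nonneg hN u i))
      (mul_nonneg hΔt.le (Pp_nonneg r i)))

lemma Rm_nonneg (hm : ∀ i, 0 < m i) (hΔt : 0 < Δt) (i : Fin N) :
    0 ≤ Rm hN r m Δt u i := by
  unfold Rm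
  split
  · exact zero_le_one
  · refine le_min zero_le_one ?_
    have ha : m i * Qm hN u i ≤ 0 :=
      mul_nonpos_of_nonneg_of_nonpos (hm i).le (Qm_nonpos hN u i)
    have hb : Δt * Pm r i ≤ 0 :=
      mul_nonpos_of_nonneg_of_nonpos hΔt.le (Pm_nonpos r i)
    have := div_nonneg (neg_nonneg.2 ha) (neg_nonneg.2 hb)
    rwa [neg_div_neg_eq] at this

lemma alpha_mul_le (hm : ∀ i, 0 < m i) (hΔt : 0 < Δt) (i j : Fin N) :
    zalesakAlpha hN r m Δt u i j * r i j ≤ Rp hN r m Δt u i * max (r i j) 0 := by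
  unfold zalesakAlpha
  split
  · rename_i h
    rw [max_eq_left h.le]
    exact mul_le_mul_of_nonneg_right (min_le_left _ _) h.le
  · rename_i h
    push_neg at h
    rw [max_eq_right h]
    rw [mul_zero]
    exact mul_nonpos_of_nonneg_of_nonpos
      (le_min (Rm_nonneg hN r m Δt u hm hΔt i) (Rp_nonneg hN r m Δt u hm hΔt j)) h

lemma le_alpha_mul (hm : ∀ i, 0 < m i) (hΔt : 0 < Δt) (i j : Fin N) :
    Rm hN r m Δt u i * min (r i j) 0 ≤ zalesakAlpha hN r m Δt u i j * r i j := by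
  unfold zalesakAlpha
  split
  · rename_i h
    rw [min_eq_right h.le, mul_zero]
    exact mul_nonneg
      (le_min (Rp_nonneg hN r m Δt u hm hΔt i) (Rm_nonneg hN r m Δt u hm hΔt j)) h.le
  · rename_i h
    push_neg at h
    rw [min_eq_left h]
    exact mul_le_mul_of_nonpos_right (min_le_left _ _) h

lemma RpPp_le (hm : ∀ i, 0 < m i) (hΔt : 0 < Δt) (i : Fin N) :
    Rp hN r m Δt u i * Pp r i ≤ m i * Qp hN u i / Δt := by
  unfold Rp
  split
  · rename_i h
    rw [h, mul_zero]
    exact div_nonneg (mul_nonneg (hm i).le (Qp_nonneg hN u i)) hΔt.le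
  · rename_i h
    have hP : 0 < Pp r i := lt_of_le_of_ne (Pp_nonneg r i) (Ne.symm h)
    calc min 1 (m i * Qp hN u i / (Δt * Pp r i)) * Pp r i
        ≤ (m i * Qp hN u i / (Δt * Pp r i)) * Pp r i :=
          mul_le_mul_of_nonneg_right (min_le_right _ _) hP.le
      _ = m i * Qp hN u i / Δt := by field_simp

lemma le_RmPm (hm : ∀ i, 0 < m i) (hΔt : 0 < Δt) (i : Fin N) :
    m i * Qm hN u i / Δt ≤ Rm hN r m Δt u i * Pm r i := by
  unfold Rm
  split
  · rename_i h
    rw [h, mul_zero]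
    exact div_nonpos_of_nonpos_of_nonneg
      (mul_nonpos_of_nonneg_of_nonpos (hm i).le (Qm_nonpos hN u i)) hΔt.le
  · rename_i h
    have hP : Pm r i < 0 := lt_of_le_of_ne (Pm_nonpos r i) h
    calc m i * Qm hN u i / Δt
        = (m i * Qm hN u i / (Δt * Pm r i)) * Pm r i := by field_simp
      _ ≤ min 1 (m i * Qm hN u i / (Δt * Pm r i)) * Pm r i :=
          mul_le_mul_of_nonpos_right (min_le_right _ _) hP.le

end ZalesakAux

/-- Local discrete maximum principle for the flux-corrected value produced by
Zalesak's limiter. -/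
theorem zalesak_local_discrete_maximum_principle
    (N : ℕ) (hN : 2 ≤ N) (r : Fin N → Fin N → ℝ)
    (m : Fin N → ℝ) (hm : ∀ i, 0 < m i) (Δt : ℝ) (hΔt : 0 < Δt) (u : Fin N → ℝ) :
    ∀ i,
      Finset.univ.inf' (univNonempty (by omega)) u ≤
        u i + Δt / m i * ∑ j ∈ Finset.univ.erase i, zalesakAlpha hN r m Δt u i j * r i j ∧
      u i + Δt / m i * ∑ j ∈ Finset.univ.erase i, zalesakAlpha hN r m Δt u i j * r i j ≤
        Finset.univ.sup' (univNonempty (by omega)) u := by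
  intro i
  have hmi := hm i
  set S := ∑ j ∈ Finset.univ.erase i, zalesakAlpha hN r m Δt u i j * r i j with hS
  have hup : S ≤ m i * Qp hN u i / Δt := by
    calc S ≤ ∑ j ∈ Finset.univ.erase i, Rp hN r m Δt u i * max (r i j) 0 :=
        Finset.sum_le_sum fun j _ => alpha_mul_le hN r m Δt u hm hΔt i j
      _ = Rp hN r m Δt u i * Pp r i := by rw [Pp, Finset.mul_sum]
      _ ≤ _ := RpPp_le hN r m Δt u hm hΔt i
  have hlo : m i * Qm hN u i / Δt ≤ S := by
    calc m i * Qm hN u i / Δt ≤ Rm hN r m Δt u i * Pm r i := le_RmPm hN r m Δt u hm hΔt i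
      _ = ∑ j ∈ Finset.univ.erase i, Rm hN r m Δt u i * min (r i j) 0 := by
          rw [Pm, Finset.mul_sum]
      _ ≤ S := Finset.sum_le_sum fun j _ => le_alpha_mul hN r m Δt u hm hΔt i j
  have hdm : 0 ≤ Δt / m i := by positivity
  have hQm : Δt / m i * (m i * Qm hN u i / Δt) = Qm hN u i := by field_simp
  have hQp : Δt / m i * (m i * Qp hN u i / Δt) = Qp hN u i := by field_simp
  constructor
  · have h1 : Qm hN u i ≤ Δt / m i * S := by
      rw [← hQm]; exact mul_le_mul_of_nonneg_left hlo hdm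
    have hinf : ∀ j : Fin N,
        Finset.univ.inf' (univNonempty (show 1 ≤ N by omega)) u ≤ u j :=
      fun j => Finset.inf'_le u (Finset.mem_univ j)
    have h2 : Finset.univ.inf' (univNonempty (show 1 ≤ N by omega)) u - u i ≤ Qm hN u i :=
      le_min (by linarith [hinf i])
        (Finset.le_inf' _ _ fun j hj => by linarith [hinf j])
    linarith
  · have h1 : Δt / m i * S ≤ Qp hN u i := by
      rw [← hQp]; exact mul_le_mul_of_nonneg_left hup hdm
    have hsup : ∀ j : Fin N,
        u j ≤ Finset.univ.sup' (univNonempty (show 1 ≤ N by omega)) u :=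
      fun j => Finset.le_sup' u (Finset.mem_univ j)
    have h2 : Qp hN u i ≤ Finset.univ.sup' (univNonempty (show 1 ≤ N by omega)) u - u i :=
      max_le (by linarith [hsup i])
        (Finset.sup'_le _ _ fun j hj => by linarith [hsup j])
    linarith
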